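/- arXiv:1112.5761 — 7 statements merged into one kernel-verified Lean document; each statement's English description precedes it below -/
import Mathlib

section
/- Let {Θ_i}_{i∈I} be a family of sets of partial functions from X to V such that each Θ_i is lub closed. Then the family lub ⊔{Θ_i | i ∈ I} is lub closed, and ∪{Θ_i | i ∈ I} ⊆ ⊔{Θ_i | i ∈ I}. -/
/- Partial functions X ⇀ V are modeled as functions `X → Option V`. -/

variable {X V E : Type*}

/-- `θ` is less informative than `θ'` (θ ⊑ θ'): wherever `θ` is defined, `θ'` is
defined with the same value. -/
def PFle (θ θ' : X → Option V) : Prop :=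
  ∀ x v, θ x = some v → θ' x = some v

/-- The everywhere-undefined partial function ⊥. -/
def pbot : X → Option V := fun _ => none

/-- `θ'` is an upper bound of the set `Θ` of partial functions. -/
def IsUB (Θ : Set (X → Option V)) (θ' : X → Option V) : Prop :=
  ∀ θ ∈ Θ, PFle θ θ'

/-- `θ'` is the least upper bound (⊔Θ) of the set `Θ` of partial functions. -/
def IsLubPF (Θ : Set (X → Option V)) (θ' : X → Option V) : Prop :=
  IsUB Θ θ' ∧ ∀ θ'', IsUB Θ θ'' → PFle θ' θ''

/-- Θ is lub closed: every subset of Θ admitting an upper bound has its lub in Θ. -/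
def LubClosed (Θ : Set (X → Option V)) : Prop :=
  ∀ Θ' ⊆ Θ, ∀ u, IsLubPF Θ' u → u ∈ Θ

/-- The family lub ⊔{Θ_i | i ∈ I}. -/
def famLub {I : Type*} (Θ : I → Set (X → Option V)) : Set (X → Option V) :=
  {θ | ∃ f : I → (X → Option V), (∀ i, f i ∈ Θ i) ∧ IsLubPF (Set.range f) θ}

open Classical in
/-- Explicit lub of a set bounded by `b`. -/
noncomputable def psup (Θ' : Set (X → Option V)) (b : X → Option V) : X → Option V :=
  fun x => if ∃ θ ∈ Θ', ∃ v, θ x = some v then b x else none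

lemma psup_isLub (Θ' : Set (X → Option V)) (b : X → Option V) (hb : IsUB Θ' b) :
    IsLubPF Θ' (psup Θ' b) := by
  constructor
  · intro θ hθ x v hv
    simp only [psup]
    rw [if_pos ⟨θ, hθ, v, hv⟩]
    exact hb θ hθ x v hv
  · intro w hw x v hv
    simp only [psup] at hv
    by_cases hcond : ∃ θ ∈ Θ', ∃ w, θ x = some w
    · rw [if_pos hcond] at hv
      obtain ⟨θ, hθ, v', hv'⟩ := hcond
      have hb' := hb θ hθ x v' hv'
      rw [hb'] at hv
      injection hv with he
      subst he
      exact hw θ hθ x v' hv'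
    · rw [if_neg hcond] at hv
      exact absurd hv (by simp)

lemma pbot_le (θ : X → Option V) : PFle pbot θ := by
  intro x v hv; simp [pbot] at hv

lemma pbot_isLub_empty : IsLubPF (∅ : Set (X → Option V)) pbot :=
  ⟨fun θ hθ => hθ.elim, fun w _ => pbot_le w⟩

/-- If each Θ_i is lub closed, then ⊔{Θ_i | i ∈ I} is lub closed and it includes
∪{Θ_i | i ∈ I}. -/
theorem stmt5 {I : Type*} (Θ : I → Set (X → Option V))
    (h : ∀ i, LubClosed (Θ i)) :
    LubClosed (famLub Θ) ∧ (⋃ i, Θ i) ⊆ famLub Θ := by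
  classical
  have hbot : ∀ i, pbot ∈ Θ i := fun i =>
    h i ∅ (Set.empty_subset _) pbot pbot_isLub_empty
  constructor
  · intro S hS u hu
    -- choose for each θ ∈ S a witnessing family
    have hchoose : ∀ θ : S, ∃ g : I → (X → Option V),
        (∀ i, g i ∈ Θ i) ∧ IsLubPF (Set.range g) θ.1 := fun θ => hS θ.2
    choose g hg hglub using hchoose
    set T : I → Set (X → Option V) := fun i => Set.range (fun θ : S => g θ i) with hT
    have hTub : ∀ i, IsUB (T i) u := by
      intro i ψ hψ
      obtain ⟨θ, rfl⟩ := hψ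
      intro x v hv
      have h1 : PFle (g θ i) θ.1 := (hglub θ).1 (g θ i) ⟨i, rfl⟩
      exact hu.1 θ.1 θ.2 x v (h1 x v hv)
    set f : I → (X → Option V) := fun i => psup (T i) u with hf
    have hflub : ∀ i, IsLubPF (T i) (f i) := fun i => psup_isLub (T i) u (hTub i)
    refine ⟨f, fun i => ?_, ?_, ?_⟩
    · exact h i (T i) (by rintro ψ ⟨θ, rfl⟩; exact hg θ i) (f i) (hflub i)
    · rintro ψ ⟨i, rfl⟩
      exact (hflub i).2 u (hTub i)
    · intro w hw
      refine hu.2 w ?_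
      intro θ hθ
      refine (hglub ⟨θ, hθ⟩).2 w ?_
      rintro ψ ⟨i, rfl⟩
      intro x v hv
      have h1 : PFle (g ⟨θ, hθ⟩ i) (f i) := (hflub i).1 _ ⟨⟨θ, hθ⟩, rfl⟩
      exact hw (f i) ⟨i, rfl⟩ x v (h1 x v hv)
  · intro θ hθ
    simp only [Set.mem_iUnion] at hθ
    obtain ⟨i, hi⟩ := hθ
    refine ⟨fun j => if j = i then θ else pbot, fun j => ?_, ?_, ?_⟩
    · by_cases hj : j = i
      · subst hj; simp [hi]
      · simp [hj, hbot j]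
    · rintro ψ ⟨j, rfl⟩
      by_cases hj : j = i
      · subst hj; simp only [if_pos rfl]; exact fun x v hv => hv
      · simp only [if_neg hj]; exact pbot_le θ
    · intro w hw
      have : (fun j => if j = i then θ else pbot) i = θ := by simp
      exact this ▸ hw _ ⟨i, rfl⟩
end

section
/- Let Θ be a lub closed set of partial functions from X to V and let θ' : X ⇀ V. Then (θ']_Θ = {θ ∈ Θ : θ ⊑ θ'} is lub closed, and (θ']_Θ has a maximum, i.e., there is an element max (θ']_Θ of (θ']_Θ with θ ⊑ max (θ']_Θ for every θ ∈ (θ']_Θ. -/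
/- Partial functions X ⇀ V are modeled as functions `X → Option V`. -/

variable {X V E : Type*}

/-- (θ']_Θ : the elements of Θ that are less informative than θ'. -/
def below (θ' : X → Option V) (Θ : Set (X → Option V)) : Set (X → Option V) :=
  {θ ∈ Θ | PFle θ θ'}

/-- If Θ is lub closed then (θ']_Θ is lub closed and has a maximum. -/
theorem stmt8 (Θ : Set (X → Option V)) (hΘ : LubClosed Θ) (θ' : X → Option V) :
    LubClosed (below θ' Θ) ∧
    ∃ m ∈ below θ' Θ, ∀ θ ∈ below θ' Θ, PFle θ m := by
  classical
  constructor
  · intro Θ' hsub u hu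
    refine ⟨hΘ Θ' (fun θ hθ => (hsub hθ).1) u hu, ?_⟩
    exact hu.2 θ' (fun θ hθ => (hsub hθ).2)
  · set m : X → Option V :=
      fun x => if ∃ θ ∈ below θ' Θ, (θ x).isSome then θ' x else none with hm
    have hlub : IsLubPF (below θ' Θ) m := by
      constructor
      · intro θ hθ x v hx
        have : ∃ θ₀ ∈ below θ' Θ, (θ₀ x).isSome := ⟨θ, hθ, by simp [hx]⟩
        simp only [hm, if_pos this]
        exact hθ.2 x v hx
      · intro θ'' hub x v hx
        simp only [hm] at hx
        split at hx
        · rename_i h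
          obtain ⟨θ₀, hθ₀, hs⟩ := h
          obtain ⟨w, hw⟩ := Option.isSome_iff_exists.mp hs
          have := hθ₀.2 x w hw
          rw [this] at hx
          exact hx ▸ hub θ₀ hθ₀ x w hw
        · exact absurd hx (by simp)
    have hmΘ : m ∈ Θ := hΘ _ (fun θ hθ => hθ.1) m hlub
    have hmle : PFle m θ' := by
      intro x v hx
      simp only [hm] at hx
      split at hx
      · exact hx
      · exact absurd hx (by simp)
    exact ⟨m, ⟨hmΘ, hmle⟩, hlub.1⟩
end

section
/- Let Θ be a lub closed set of partial functions from X to V, let θ : X ⇀ V, and suppose θ' ∈ {θ} ⊔ Θ. Then the set {θ'' ∈ Θ : ⊔{θ, θ''} exists and equals θ'} has a maximum, and this maximum equals max (θ']_Θ. -/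
/- Partial functions X ⇀ V are modeled as functions `X → Option V`. -/

variable {X V E : Type*}

/-- {θ} ⊔ Θ : the set of all existing lubs θ ⊔ θ'' with θ'' ∈ Θ. -/
def joinOne (θ : X → Option V) (Θ : Set (X → Option V)) : Set (X → Option V) :=
  {θ' | ∃ θ'' ∈ Θ, IsLubPF {θ, θ''} θ'}

/-- For Θ lub closed and θ' ∈ {θ} ⊔ Θ, the set {θ'' ∈ Θ : θ ⊔ θ'' = θ'} has a maximum,
which is also the maximum of (θ']_Θ. -/
theorem stmt9 (Θ : Set (X → Option V)) (hΘ : LubClosed Θ)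
    (θ θ' : X → Option V) (hθ' : θ' ∈ joinOne θ Θ) :
    ∃ m,
      ((m ∈ Θ ∧ IsLubPF {θ, m} θ') ∧
        ∀ θ'', θ'' ∈ Θ → IsLubPF {θ, θ''} θ' → PFle θ'' m) ∧
      (m ∈ below θ' Θ ∧ ∀ q ∈ below θ' Θ, PFle q m) := by

  classical
  obtain ⟨θ₀, hθ₀Θ, hlub₀⟩ := hθ'
  set S := below θ' Θ with hS
  set m : X → Option V := fun x => if ∃ p ∈ S, (p x).isSome then θ' x else none with hm
  -- m is an upper bound of S
  have hub : IsUB S m := by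
    intro p hp x v hpx
    have hle : θ' x = some v := hp.2 x v hpx
    have : ∃ p ∈ S, (p x).isSome := ⟨p, hp, by rw [hpx]; rfl⟩
    simp only [hm, if_pos this]
    exact hle
  have hlubS : IsLubPF S m := by
    refine ⟨hub, ?_⟩
    intro u hu x v hmx
    by_cases h : ∃ p ∈ S, (p x).isSome
    · obtain ⟨p, hp, hpx⟩ := h
      obtain ⟨w, hw⟩ := Option.isSome_iff_exists.mp hpx
      have h1 : θ' x = some w := hp.2 x w hw
      have hex : ∃ p ∈ S, (p x).isSome := ⟨p, hp, hpx⟩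
      have h2 : θ' x = some v := by simpa only [hm, if_pos hex] using hmx
      have : w = v := by rw [h1] at h2; exact Option.some.inj h2
      exact hu p hp x v (this ▸ hw)
    · simp only [hm, if_neg h] at hmx; exact absurd hmx (by simp)
  have hmΘ : m ∈ Θ := hΘ S (fun p hp => hp.1) m hlubS
  have hmle : PFle m θ' := by
    intro x v hmx
    by_cases h : ∃ p ∈ S, (p x).isSome
    · simpa only [hm, if_pos h] using hmx
    · simp only [hm, if_neg h] at hmx; exact absurd hmx (by simp)
  have hmS : m ∈ S := ⟨hmΘ, hmle⟩
  have hmax : ∀ q ∈ S, PFle q m := fun q hq => hub q hq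
  have hθle : PFle θ θ' := hlub₀.1 θ (by simp)
  have hθ₀le : PFle θ₀ θ' := hlub₀.1 θ₀ (by simp)
  have hθ₀m : PFle θ₀ m := hmax θ₀ ⟨hθ₀Θ, hθ₀le⟩
  have hlubm : IsLubPF {θ, m} θ' := by
    constructor
    · intro p hp
      rcases hp with hp | hp
      · exact hp ▸ hθle
      · exact hp ▸ hmle
    · intro u hu
      apply hlub₀.2
      intro p hp
      rcases hp with hp | hp
      · exact hp ▸ hu θ (by simp)
      · intro x v hx
        exact hu m (by simp) x v (hθ₀m x v (hp ▸ hx))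
  refine ⟨m, ⟨⟨hmΘ, hlubm⟩, ?_⟩, hmS, hmax⟩
  intro θ'' hΘ'' hlub'' 
  exact hmax θ'' ⟨hΘ'', hlub''.1 θ'' (by simp)⟩
end

section
/- Let Θ be a lub closed set of partial functions from X to V and let θ : X ⇀ V. If θ1, θ2 ∈ {θ} ⊔ Θ are such that θ1 = max (θ2]_Θ, then θ1 = θ2. -/
/- Partial functions X ⇀ V are modeled as functions `X → Option V`. -/

variable {X V E : Type*}

/-- For Θ lub closed, if θ₁, θ₂ ∈ {θ} ⊔ Θ and θ₁ is the maximum of (θ₂]_Θ,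
then θ₁ = θ₂. -/
theorem stmt10 (Θ : Set (X → Option V)) (hΘ : LubClosed Θ)
    (θ θ₁ θ₂ : X → Option V)
    (h₁ : θ₁ ∈ joinOne θ Θ) (h₂ : θ₂ ∈ joinOne θ Θ)
    (hmem : θ₁ ∈ below θ₂ Θ) (hmax : ∀ q ∈ below θ₂ Θ, PFle q θ₁) :
    θ₁ = θ₂ := by
  obtain ⟨a, ha, hlub₁⟩ := h₁
  obtain ⟨b, hb, hlub₂⟩ := h₂
  -- θ ⊑ θ₁
  have hθ1 : PFle θ θ₁ := hlub₁.1 θ (by left; rfl)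
  -- b ⊑ θ₂, so b ∈ below θ₂ Θ, so b ⊑ θ₁
  have hbθ2 : PFle b θ₂ := hlub₂.1 b (by right; rfl)
  have hbθ1 : PFle b θ₁ := hmax b ⟨hb, hbθ2⟩
  -- θ₁ is an upper bound of {θ, b}, so θ₂ ⊑ θ₁
  have hub : IsUB {θ, b} θ₁ := by
    intro q hq
    rcases hq with rfl | rfl
    · exact hθ1
    · exact hbθ1
  have h21 : PFle θ₂ θ₁ := hlub₂.2 θ₁ hub
  have h12 : PFle θ₁ θ₂ := hmem.2
  funext x
  cases hx1 : θ₁ x with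
  | some v => rw [h12 x v hx1]
  | none =>
    cases hx2 : θ₂ x with
    | none => rfl
    | some v => rw [h21 x v hx2] at hx1; exact absurd hx1 (by simp)
end

section
/- If Θ is a finite set of partial functions from X to V, then its lub closure Θ̄ is also finite. -/
/- Partial functions X ⇀ V are modeled as functions `X → Option V`. -/

variable {X V E : Type*}

/-- The lub closure of Θ: the intersection of all lub closed sets including Θ. -/
def lubClosure (Θ : Set (X → Option V)) : Set (X → Option V) :=
  ⋂₀ {Θ' | Θ ⊆ Θ' ∧ LubClosed Θ'}


theorem lub_unique {S : Set (X → Option V)} {u u' : X → Option V}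
    (hu : IsLubPF S u) (hu' : IsLubPF S u') : u = u' := by
  have h1 : PFle u u' := hu.2 u' hu'.1
  have h2 : PFle u' u := hu'.2 u hu.1
  funext x
  cases h : u x with
  | none =>
    cases h' : u' x with
    | none => rfl
    | some v => exact absurd (h2 x v h') (by simp [h])
  | some v => exact (h1 x v h).symm

/-- The lub closure of a finite set of partial functions is finite. -/
theorem stmt13 (Θ : Set (X → Option V)) (hΘ : Θ.Finite) :
    (lubClosure Θ).Finite := by
  set C : Set (X → Option V) := {u | ∃ Θ' ⊆ Θ, IsLubPF Θ' u} with hC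
  have hsub : lubClosure Θ ⊆ C := by
    intro u hu
    apply hu
    constructor
    · intro θ hθ
      exact ⟨{θ}, by simpa using hθ, fun t ht => by simp at ht; subst ht; exact fun x v h => h,
        fun w hw => hw θ (by simp)⟩
    · intro S hS u hu
      refine ⟨{θ | ∃ s ∈ S, ∃ Θ', Θ' ⊆ Θ ∧ IsLubPF Θ' s ∧ θ ∈ Θ'}, ?_, ?_, ?_⟩
      · rintro θ ⟨s, _, Θ', hΘ', _, hθ⟩
        exact hΘ' hθ
      · rintro θ ⟨s, hs, Θ', _, hlub, hθ⟩
        intro x v h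
        exact hu.1 s hs x v (hlub.1 θ hθ x v h)
      · intro w hw
        apply hu.2
        intro s hs
        obtain ⟨Θ', hΘ'Θ, hlub⟩ := hS hs
        exact hlub.2 w (fun θ hθ => hw θ ⟨s, hs, Θ', hΘ'Θ, hlub, hθ⟩)
  apply Set.Finite.subset _ hsub
  have : C ⊆ ⋃ Θ' ∈ {s | s ⊆ Θ}, {u | IsLubPF Θ' u} := by
    rintro u ⟨Θ', hΘ', hlub⟩
    exact Set.mem_biUnion hΘ' hlub
  apply Set.Finite.subset _ this
  apply Set.Finite.biUnion hΘ.finite_subsets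
  intro Θ' _
  apply Set.Subsingleton.finite
  intro a ha b hb
  exact lub_unique ha hb
end

section
/- For any parametric trace τ (a finite list of parametric events), the set Θ_τ is a finite lub closed set of partial functions from X to V. -/
/- Partial functions X ⇀ V are modeled as functions `X → Option V`. -/

variable {X V E : Type*}

/-- A parametric event is a pair e⟨θ⟩; a parametric trace is a finite list of
parametric events. Θ_τ is the lub closure of the parameter instances occurring in τ. -/
def ThetaOf (τ : List (E × (X → Option V))) : Set (X → Option V) :=
  lubClosure {θ | ∃ e : E, (e, θ) ∈ τ}

open Classical

/-- Canonical sup of a set of partial functions. -/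
noncomputable def supPF (Θ : Set (X → Option V)) : X → Option V :=
  fun x => if h : ∃ v, ∃ θ ∈ Θ, θ x = some v then some h.choose else none

lemma lub_eq_supPF {Θ : Set (X → Option V)} {u} (hu : IsLubPF Θ u) : u = supPF Θ := by
  funext x
  by_cases h : ∃ v, ∃ θ ∈ Θ, θ x = some v
  · obtain ⟨θ, hθ, hx⟩ := h.choose_spec
    have h1 : u x = some h.choose := hu.1 θ hθ x _ hx
    simp [supPF, h, h1]
  · simp only [supPF, dif_neg h]
    by_contra hne
    obtain ⟨v, hv⟩ := Option.ne_none_iff_exists'.mp hne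
    have hub : IsUB Θ (fun y => if y = x then none else u y) := by
      intro θ hθ y w hy
      have huy : u y = some w := hu.1 θ hθ y w hy
      by_cases hyx : y = x
      · exact absurd ⟨w, θ, hθ, hyx ▸ hy⟩ h
      · simpa [hyx] using huy
    have := hu.2 _ hub x v hv
    simp at this

lemma lub_singleton (θ : X → Option V) : IsLubPF {θ} θ :=
  ⟨fun θ' h => by cases h; exact fun _ _ hv => hv,
   fun θ'' h => h θ rfl⟩

/-- The set of lubs of subsets of S. -/
def lubsOf (S : Set (X → Option V)) : Set (X → Option V) :=
  {u | ∃ A ⊆ S, IsLubPF A u}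

lemma subset_lubsOf (S : Set (X → Option V)) : S ⊆ lubsOf S := by
  intro θ hθ
  exact ⟨{θ}, Set.singleton_subset_iff.mpr hθ, lub_singleton θ⟩

lemma lubsOf_lubClosed (S : Set (X → Option V)) : LubClosed (lubsOf S) := by
  intro Θ' hΘ' u hu
  refine ⟨{θ ∈ S | PFle θ u}, Set.sep_subset _ _, ?_, ?_⟩
  · intro θ hθ
    exact hθ.2
  · intro θ'' hθ''
    refine hu.2 θ'' ?_
    intro v hv
    obtain ⟨A, hAS, hA⟩ := hΘ' hv
    refine hA.2 θ'' ?_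
    intro a ha x w hw
    exact hθ'' a ⟨hAS ha, fun y z hz => hu.1 v hv y z (hA.1 a ha y z hz)⟩ x w hw

lemma lubsOf_finite {S : Set (X → Option V)} (hS : S.Finite) : (lubsOf S).Finite := by
  have h1 : lubsOf S ⊆ supPF '' {A | A ⊆ S} := by
    rintro u ⟨A, hAS, hA⟩
    exact ⟨A, hAS, (lub_eq_supPF hA).symm⟩
  exact Set.Finite.subset (Set.Finite.image _ hS.finite_subsets) h1

lemma lubClosure_subset {S T : Set (X → Option V)} (hST : S ⊆ T) (hT : LubClosed T) :
    lubClosure S ⊆ T :=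
  Set.sInter_subset_of_mem ⟨hST, hT⟩

lemma lubClosed_lubClosure (S : Set (X → Option V)) : LubClosed (lubClosure S) := by
  intro Θ' hΘ' u hu
  rw [lubClosure, Set.mem_sInter]
  rintro T ⟨hST, hT⟩
  exact hT Θ' (hΘ'.trans (Set.sInter_subset_of_mem ⟨hST, hT⟩)) u hu

/-- For any parametric trace τ, the set Θ_τ is a finite lub closed set. -/
theorem stmt14 (τ : List (E × (X → Option V))) :
    (ThetaOf τ).Finite ∧ LubClosed (ThetaOf τ) := by
  constructor
  · have hS : ({θ | ∃ e : E, (e, θ) ∈ τ} : Set (X → Option V)).Finite := by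
      apply Set.Finite.subset (List.finite_toSet (τ.map Prod.snd))
      rintro θ ⟨e, he⟩
      exact List.mem_map.mpr ⟨(e, θ), he, rfl⟩
    exact Set.Finite.subset (lubsOf_finite hS)
      (lubClosure_subset (subset_lubsOf _) (lubsOf_lubClosed _))
  · exact lubClosed_lubClosure _
end

section
/- If M = (S, E, C, i, σ, γ) is a monitor for the property P : E* → C, then the parametric monitor ΛX.M is a monitor for the parametric property ΛX.P; concretely, for every parametric trace τ and every parameter instance θ : X ⇀ V, (ΛX.σ)(λθ.i, τ)(θ) = σ(i, τ↾θ), and hence (ΛX.γ)((ΛX.σ)(λθ.i, τ))(θ) = P(τ↾θ) = (ΛX.P)(τ)(θ). -/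
/- Partial functions X ⇀ V are modeled as functions `X → Option V`. -/

variable {X V E : Type*}

/-- The θ-trace traceSlice τ↾θ : keep (in order) the base events of τ whose parameter
instance is ⊑ θ, dropping the parameter instances. -/
noncomputable def traceSlice (τ : List (E × (X → Option V))) (θ : X → Option V) :
    List E :=
  (τ.filter fun p => @decide (PFle p.2 θ) (Classical.propDecidable _)).map Prod.fst

/-- The transition function of a monitor extended to traces:
σ(s, ε) = s and σ(s, w e) = σ(σ(s, w), e). -/
def runMon {S : Type*} (σ : S → E → S) (s : S) (w : List E) : S :=
  w.foldl σ s

/- One transition of the parametric monitor ΛX.M on parametric event ev = e⟨θ'⟩: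
(ΛX.σ)(δ, e⟨θ'⟩)(θ) = σ(δ(θ), e) if θ' ⊑ θ, and δ(θ) otherwise. -/
open Classical in
noncomputable def pstep {S : Type*} (σ : S → E → S)
    (δ : (X → Option V) → S) (ev : E × (X → Option V)) :
    (X → Option V) → S :=
  fun θ => if PFle ev.2 θ then σ (δ θ) ev.1 else δ θ

/-- (ΛX.σ) extended to parametric traces. -/
noncomputable def pRun {S : Type*} (σ : S → E → S)
    (δ : (X → Option V) → S) (τ : List (E × (X → Option V))) :
    (X → Option V) → S :=
  τ.foldl (pstep σ) δ

theorem aux18 {X V E S : Type*} (σ : S → E → S) (τ : List (E × (X → Option V))) :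
    ∀ (δ : (X → Option V) → S) (θ : X → Option V),
    pRun σ δ τ θ = runMon σ (δ θ) (traceSlice τ θ) := by
  induction τ with
  | nil => intro δ θ; rfl
  | cons ev t ih =>
    intro δ θ
    have : pRun σ δ (ev :: t) θ = pRun σ (pstep σ δ ev) t θ := rfl
    rw [this, ih (pstep σ δ ev) θ]
    simp only [traceSlice, List.filter_cons]
    by_cases h : PFle ev.2 θ
    · simp [h, pstep, runMon]
    · simp [h, pstep]

/-- If M = (S, E, C, i, σ, γ) is a monitor for P : E* → C, then the parametric
monitor ΛX.M is a monitor for the parametric property ΛX.P: for every parametric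
trace τ and parameter instance θ,
(ΛX.σ)(λθ.i, τ)(θ) = σ(i, τ↾θ) and (ΛX.γ)((ΛX.σ)(λθ.i, τ))(θ) = P(τ↾θ). -/
theorem stmt18 {S C : Type*} (i : S) (σ : S → E → S) (γ : S → C)
    (P : List E → C) (hM : ∀ w : List E, γ (runMon σ i w) = P w)
    (τ : List (E × (X → Option V))) (θ : X → Option V) :
    pRun σ (fun _ => i) τ θ = runMon σ i (traceSlice τ θ) ∧
    γ (pRun σ (fun _ => i) τ θ) = P (traceSlice τ θ) := by
  have h := aux18 σ τ (fun _ => i) θ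
  exact ⟨h, by rw [h, hM]⟩
end
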